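/- For x ∈ ℂ not of the form k + 1/2 with k ∈ ℤ, π tan(π x) = ∑_{k=0}^∞ (1/(k + 1/2 - x) - 1/(k + 1/2 + x)). -/

import Mathlib

open Filter Finset Topology Metric

local notation "π" => Real.pi

noncomputable def myG (n : ℕ) (z : ℂ) : ℂ :=
  ∏ k ∈ Finset.range n, (1 - z ^ 2 / ((k : ℂ) + 1 / 2) ^ 2)

lemma half_ne (n : ℕ) : ((n : ℂ) + 1 / 2) ≠ 0 := by
  intro h
  have h2 := congrArg Complex.re h
  simp [Complex.add_re] at h2
  have : (0:ℝ) ≤ (n:ℝ) := n.cast_nonneg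
  linarith

lemma prod_split (n : ℕ) (z : ℂ) :
    ∏ j ∈ Finset.range (2 * n), (1 - (2 * z) ^ 2 / ((j : ℂ) + 1) ^ 2) =
      myG n z * ∏ k ∈ Finset.range n, (1 - z ^ 2 / ((k : ℂ) + 1) ^ 2) := by
  induction n with
  | zero => simp [myG]
  | succ n ih =>
    have h2 : 2 * (n + 1) = (2 * n) + 1 + 1 := by ring
    rw [h2, Finset.prod_range_succ, Finset.prod_range_succ, ih]
    have e1 : (1 - (2 * z) ^ 2 / (((2 * n : ℕ) : ℂ) + 1) ^ 2) =
        (1 - z ^ 2 / ((n : ℂ) + 1 / 2) ^ 2) := by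
      have h : (((2 * n : ℕ) : ℂ) + 1) = 2 * ((n : ℂ) + 1 / 2) := by push_cast; ring
      rw [h]
      have hne := half_ne n
      field_simp
    have e2 : (1 - (2 * z) ^ 2 / (((2 * n + 1 : ℕ) : ℂ) + 1) ^ 2) =
        (1 - z ^ 2 / ((n : ℂ) + 1) ^ 2) := by
      have h : (((2 * n + 1 : ℕ) : ℂ) + 1) = 2 * ((n : ℂ) + 1) := by push_cast; ring
      rw [h]
      have hne : ((n : ℂ) + 1) ≠ 0 := Nat.cast_add_one_ne_zero n
      field_simp
    simp only [myG, Finset.prod_range_succ]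
    rw [e1, e2]
    ring

lemma myG_tendsto {z : ℂ} (hz : Complex.sin (π * z) ≠ 0) :
    Tendsto (fun n => myG n z) atTop (𝓝 (Complex.cos (π * z))) := by
  have h1 := Complex.tendsto_euler_sin_prod (2 * z)
  have h2n : Tendsto (fun n : ℕ => 2 * n) atTop atTop :=
    tendsto_id.const_mul_atTop' zero_lt_two
  have h2 := h1.comp h2n
  have h3 := Complex.tendsto_euler_sin_prod z
  -- rewrite the double product
  have h4 : Tendsto (fun n : ℕ => (π : ℂ) * (2 * z) *
      (myG n z * ∏ k ∈ Finset.range n, (1 - z ^ 2 / ((k : ℂ) + 1) ^ 2))) atTop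
      (𝓝 (Complex.sin (π * (2 * z)))) := by
    refine h2.congr fun n => ?_
    simp only [Function.comp_apply]
    rw [prod_split]
  have hsz : Complex.sin (π * z) ≠ 0 := hz
  have hev : ∀ᶠ n in atTop,
      ((π : ℂ) * (2 * z) * (myG n z * ∏ k ∈ Finset.range n, (1 - z ^ 2 / ((k : ℂ) + 1) ^ 2))) /
        (2 * ((π : ℂ) * z * ∏ k ∈ Finset.range n, (1 - z ^ 2 / ((k : ℂ) + 1) ^ 2))) = myG n z := by
    have hne : ∀ᶠ n in atTop,
        (π : ℂ) * z * ∏ k ∈ Finset.range n, (1 - z ^ 2 / ((k : ℂ) + 1) ^ 2) ≠ 0 :=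
      h3.eventually_ne hsz
    filter_upwards [hne] with n hn
    rw [div_eq_iff (mul_ne_zero two_ne_zero hn)]
    ring
  have hdiv : Tendsto (fun n : ℕ =>
      ((π : ℂ) * (2 * z) * (myG n z * ∏ k ∈ Finset.range n, (1 - z ^ 2 / ((k : ℂ) + 1) ^ 2))) /
        (2 * ((π : ℂ) * z * ∏ k ∈ Finset.range n, (1 - z ^ 2 / ((k : ℂ) + 1) ^ 2)))) atTop
      (𝓝 (Complex.sin (π * (2 * z)) / (2 * Complex.sin (π * z)))) :=
    h4.div (h3.const_mul 2) (by simpa using hsz)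
  have hval : Complex.sin (π * (2 * z)) / (2 * Complex.sin (π * z)) = Complex.cos (π * z) := by
    have : (π : ℂ) * (2 * z) = 2 * ((π : ℂ) * z) := by ring
    rw [this, Complex.sin_two_mul]
    field_simp
  rw [hval] at hdiv
  exact (hdiv.congr' hev)

lemma norm_half (k : ℕ) : ‖((k : ℂ) + 1 / 2)‖ = (k : ℝ) + 1 / 2 := by
  rw [show ((k : ℂ) + 1 / 2) = (((k : ℝ) + 1 / 2 : ℝ) : ℂ) by push_cast; ring,
    Complex.norm_real, Real.norm_eq_abs, abs_of_pos (by positivity)]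

lemma summable_b (C : ℝ) : Summable (fun k : ℕ => C / ((k : ℝ) + 1 / 2) ^ 2) := by
  have h1 : Summable (fun n : ℕ => 1 / ((n : ℝ) + 1) ^ 2) := by
    have h0 : Summable (fun n : ℕ => 1 / (n : ℝ) ^ 2) :=
      Real.summable_one_div_nat_pow.mpr one_lt_two
    have := (summable_nat_add_iff 1).mpr h0
    refine this.congr fun n => ?_
    push_cast
    ring
  have h2 : Summable (fun k : ℕ => 4 / ((k : ℝ) + 1) ^ 2) := by
    simpa [div_eq_mul_inv, mul_comm] using h1.mul_left 4
  have h3 : Summable (fun k : ℕ => 1 / ((k : ℝ) + 1 / 2) ^ 2) := by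
    refine Summable.of_nonneg_of_le (fun k => by positivity) (fun k => ?_) h2
    rw [div_le_div_iff₀ (by positivity) (by positivity)]
    nlinarith [Nat.cast_nonneg (α := ℝ) k]
  simpa [div_eq_mul_inv] using h3.mul_left C

lemma myG_cont (n : ℕ) : Continuous (myG n) := by
  unfold myG
  refine continuous_finset_prod _ fun k _ => ?_
  exact continuous_const.sub ((continuous_pow 2).div_const _)

lemma myG_norm_le {R : ℝ} (n : ℕ) {z : ℂ} (hz : ‖z‖ ≤ R) :
    ‖myG n z‖ ≤ ∏ k ∈ Finset.range n, (1 + R ^ 2 / ((k : ℝ) + 1 / 2) ^ 2) := by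
  unfold myG
  rw [norm_prod]
  refine Finset.prod_le_prod (fun k _ => norm_nonneg _) fun k _ => ?_
  calc ‖1 - z ^ 2 / ((k : ℂ) + 1 / 2) ^ 2‖
      ≤ ‖(1 : ℂ)‖ + ‖z ^ 2 / ((k : ℂ) + 1 / 2) ^ 2‖ := norm_sub_le _ _
    _ ≤ 1 + R ^ 2 / ((k : ℝ) + 1 / 2) ^ 2 := by
        rw [norm_one, norm_div, norm_pow, norm_pow, norm_half]
        gcongr

lemma prod_le_exp {R : ℝ} (n : ℕ) :
    ∏ k ∈ Finset.range n, (1 + R ^ 2 / ((k : ℝ) + 1 / 2) ^ 2) ≤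
      Real.exp (∑' k : ℕ, R ^ 2 / ((k : ℝ) + 1 / 2) ^ 2) := by
  calc ∏ k ∈ Finset.range n, (1 + R ^ 2 / ((k : ℝ) + 1 / 2) ^ 2)
      ≤ ∏ k ∈ Finset.range n, Real.exp (R ^ 2 / ((k : ℝ) + 1 / 2) ^ 2) :=
        Finset.prod_le_prod (fun k _ => by positivity) (fun k _ => by
          have := Real.add_one_le_exp (R ^ 2 / ((k : ℝ) + 1 / 2) ^ 2); linarith)
    _ = Real.exp (∑ k ∈ Finset.range n, R ^ 2 / ((k : ℝ) + 1 / 2) ^ 2) := (Real.exp_sum _ _).symm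
    _ ≤ _ := by
        apply Real.exp_le_exp.mpr
        exact Summable.sum_le_tsum _ (fun k _ => by positivity) (summable_b _)

lemma myG_unif (R : ℝ) :
    TendstoUniformlyOn myG (fun z => Complex.cos (π * z)) atTop (ball (0 : ℂ) R) := by
  set b : ℕ → ℝ := fun k => R ^ 2 / ((k : ℝ) + 1 / 2) ^ 2 with hbdef
  set E : ℝ := Real.exp (∑' k, b k) with hEdef
  set u : ℕ → ℂ → ℂ := fun m z => myG m z * -(z ^ 2 / ((m : ℂ) + 1 / 2) ^ 2) with hudef
  have hEpos : 0 < E := Real.exp_pos _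
  have hsum : Summable (fun m => E * b m) := by
    refine (summable_b (E * R ^ 2)).congr fun m => ?_
    simp only [hbdef]; ring
  have hbound : ∀ m : ℕ, ∀ z ∈ ball (0 : ℂ) R, ‖u m z‖ ≤ E * b m := by
    intro m z hz
    rw [mem_ball_zero_iff] at hz
    have hzR : ‖z‖ ≤ R := hz.le
    have h1 : ‖myG m z‖ ≤ E := (myG_norm_le m hzR).trans (prod_le_exp m)
    have h2 : ‖-(z ^ 2 / ((m : ℂ) + 1 / 2) ^ 2)‖ ≤ b m := by
      simp only [hbdef, norm_neg, norm_div, norm_pow, norm_half]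
      gcongr
    calc ‖u m z‖ = ‖myG m z‖ * ‖-(z ^ 2 / ((m : ℂ) + 1 / 2) ^ 2)‖ := norm_mul _ _
      _ ≤ E * b m := mul_le_mul h1 h2 (norm_nonneg _) hEpos.le
  have htel : ∀ n z, 1 + ∑ m ∈ Finset.range n, u m z = myG n z := by
    intro n z
    have hu : ∀ m, u m z = myG (m + 1) z - myG m z := by
      intro m
      simp only [hudef, myG, Finset.prod_range_succ]
      ring
    simp only [hu]
    rw [Finset.sum_range_sub (fun m => myG m z)]
    simp [myG]
  have htuo := tendstoUniformlyOn_tsum_nat hsum hbound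
  have hadd : UniformContinuous (fun w : ℂ => 1 + w) := uniformContinuous_id.const_add 1
  have htuo2 : TendstoUniformlyOn (fun N z => 1 + ∑ m ∈ Finset.range N, u m z)
      (fun z => 1 + ∑' m, u m z) atTop (ball (0 : ℂ) R) := hadd.comp_tendstoUniformlyOn htuo
  set H : ℂ → ℂ := fun z => 1 + ∑' m, u m z with hHdef
  have htuoG : TendstoUniformlyOn myG H atTop (ball (0 : ℂ) R) :=
    htuo2.congr (Eventually.of_forall fun N => fun z _ => htel N z)
  have hHtend : ∀ w ∈ ball (0 : ℂ) R, Tendsto (fun n => myG n w) atTop (𝓝 (H w)) :=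
    fun w hw => htuoG.tendsto_at hw
  have heq1 : ∀ w ∈ ball (0 : ℂ) R, Complex.sin (π * w) ≠ 0 → H w = Complex.cos (π * w) :=
    fun w hw hs => tendsto_nhds_unique (hHtend w hw) (myG_tendsto hs)
  have hHcont : ContinuousOn H (ball (0 : ℂ) R) :=
    htuoG.continuousOn (Eventually.of_forall fun n => (myG_cont n).continuousOn).frequently
  refine htuoG.congr_right fun z hz => ?_
  by_cases hs : Complex.sin (π * z) = 0
  · -- z is an integer; approximate from within
    have hπ : ((π : ℝ) : ℂ) ≠ 0 := Complex.ofReal_ne_zero.mpr Real.pi_ne_zero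
    obtain ⟨m, hm⟩ := Complex.sin_eq_zero_iff.mp hs
    have hzm : z = (m : ℂ) := by
      have : ((π : ℝ) : ℂ) * z = ((π : ℝ) : ℂ) * (m : ℂ) := by rw [hm]; ring
      exact mul_left_cancel₀ hπ this
    have hzim : z.im = 0 := by rw [hzm]; simp
    set w : ℕ → ℂ := fun j => z + ((1 / ((j : ℝ) + 1) : ℝ) : ℂ) * Complex.I with hwdef
    have hwlim : Tendsto w atTop (𝓝 z) := by
      have h0 : Tendsto (fun j : ℕ => (1 / ((j : ℝ) + 1) : ℝ)) atTop (𝓝 0) :=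
        tendsto_one_div_add_atTop_nhds_zero_nat
      have h1 : Tendsto (fun j : ℕ => ((1 / ((j : ℝ) + 1) : ℝ) : ℂ)) atTop (𝓝 0) := by
        have := (Complex.continuous_ofReal.tendsto 0).comp h0
        simpa [Function.comp_def, one_div] using this
      have h2 : Tendsto (fun j : ℕ => z + ((1 / ((j : ℝ) + 1) : ℝ) : ℂ) * Complex.I) atTop
          (𝓝 (z + (0 : ℂ) * Complex.I)) := (tendsto_const_nhds (x := z)).add (h1.mul_const Complex.I)
      simpa [hwdef, one_div] using h2
    have hwball : ∀ᶠ j in atTop, w j ∈ ball (0 : ℂ) R :=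
      hwlim.eventually (isOpen_ball.eventually_mem hz)
    have hwsin : ∀ j, Complex.sin (π * w j) ≠ 0 := by
      intro j h
      obtain ⟨k, hk⟩ := Complex.sin_eq_zero_iff.mp h
      have hwk : w j = (k : ℂ) := by
        have : ((π : ℝ) : ℂ) * w j = ((π : ℝ) : ℂ) * (k : ℂ) := by rw [hk]; ring
        exact mul_left_cancel₀ hπ this
      have him := congrArg Complex.im hwk
      simp only [hwdef, Complex.add_im, Complex.mul_im, Complex.ofReal_re, Complex.I_im,
        Complex.ofReal_im, Complex.I_re, Complex.intCast_im, hzim] at him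
      have hj : (0 : ℝ) < 1 / ((j : ℝ) + 1) := by positivity
      rw [mul_one, mul_zero] at him
      linarith
    have hHw : Tendsto (fun j => H (w j)) atTop (𝓝 (H z)) :=
      (hHcont z hz).tendsto.comp
        (tendsto_nhdsWithin_of_tendsto_nhds_of_eventually_within w hwlim hwball)
    have hcosw : Tendsto (fun j => Complex.cos (π * w j)) atTop (𝓝 (Complex.cos (π * z))) := by
      have hc : Continuous fun t : ℂ => Complex.cos (π * t) :=
        Complex.continuous_cos.comp (continuous_const.mul continuous_id)
      exact (hc.tendsto z).comp hwlim
    have hequiv : (fun j => H (w j)) =ᶠ[atTop] fun j => Complex.cos (π * w j) := by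
      filter_upwards [hwball] with j hj using heq1 _ hj (hwsin j)
    exact tendsto_nhds_unique (hHw.congr' hequiv) hcosw
  · exact heq1 z hz hs
section final

theorem pi_tan_eq_tsum (x : ℂ) (hx : ∀ k : ℤ, x ≠ (k : ℂ) + 1 / 2) :
    (Real.pi : ℂ) * Complex.tan (Real.pi * x) =
      ∑' k : ℕ, (1 / ((k : ℂ) + 1 / 2 - x) - 1 / ((k : ℂ) + 1 / 2 + x)) := by
  have hπ : ((π : ℝ) : ℂ) ≠ 0 := Complex.ofReal_ne_zero.mpr Real.pi_ne_zero
  have hsub : ∀ k : ℕ, ((k : ℂ) + 1 / 2 - x) ≠ 0 := by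
    intro k h
    refine hx (k : ℤ) ?_
    push_cast
    linear_combination -h
  have hadd : ∀ k : ℕ, ((k : ℂ) + 1 / 2 + x) ≠ 0 := by
    intro k h
    refine hx (-(k : ℤ) - 1) ?_
    push_cast
    linear_combination h
  have hfac : ∀ k : ℕ, (1 - x ^ 2 / ((k : ℂ) + 1 / 2) ^ 2) ≠ 0 := by
    intro k h
    have hc := half_ne k
    have h1 : x ^ 2 / ((k : ℂ) + 1 / 2) ^ 2 = 1 := by linear_combination -h
    have hx2 : x ^ 2 = ((k : ℂ) + 1 / 2) ^ 2 :=
      (div_eq_one_iff_eq (pow_ne_zero 2 hc)).mp h1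
    have h2 : (((k : ℂ) + 1 / 2) - x) * (((k : ℂ) + 1 / 2) + x) = 0 := by
      linear_combination -hx2
    rcases mul_eq_zero.mp h2 with h3 | h3
    · exact hsub k h3
    · exact hadd k h3
  have hcos : Complex.cos ((π : ℝ) * x) ≠ 0 := by
    intro h
    obtain ⟨k, hk⟩ := Complex.cos_eq_zero_iff.mp h
    refine hx k ?_
    have : ((π : ℝ) : ℂ) * x = ((π : ℝ) : ℂ) * ((k : ℂ) + 1 / 2) := by
      rw [hk]; push_cast; ring
    exact mul_left_cancel₀ hπ this
  set R : ℝ := ‖x‖ + 1 with hRdef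
  have hxball : x ∈ ball (0 : ℂ) R := by
    rw [mem_ball_zero_iff]; simp [hRdef]
  -- differentiability
  have hdiff : ∀ n, DifferentiableOn ℂ (myG n) (ball (0 : ℂ) R) := by
    intro n
    refine Differentiable.differentiableOn ?_
    intro z
    unfold myG
    refine DifferentiableAt.fun_finsetProd fun k _ => ?_
    exact (differentiableAt_const _).sub ((differentiableAt_pow 2).div_const _)
  -- limit of log derivatives
  have hld := Complex.logDeriv_tendsto (f := myG) (g := fun z => Complex.cos ((π : ℝ) * z)) isOpen_ball
    hxball
    ((myG_unif R).tendstoLocallyUniformlyOn) (Filter.Eventually.of_forall hdiff)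
    (by simpa using hcos)
  -- value of the limit log derivative
  have hldcos : logDeriv (fun z => Complex.cos ((π : ℝ) * z)) x =
      -(((π : ℝ) : ℂ) * Complex.tan ((π : ℝ) * x)) := by
    have hd : HasDerivAt (fun z : ℂ => Complex.cos ((π : ℝ) * z))
        (-Complex.sin (((π : ℝ) : ℂ) * x) * (((π : ℝ) : ℂ) * 1)) x :=
      (Complex.hasDerivAt_cos (((π : ℝ) : ℂ) * x)).comp x ((hasDerivAt_id x).const_mul _)
    rw [logDeriv_apply, hd.deriv, Complex.tan_eq_sin_div_cos]
    field_simp [hcos]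
    try ring
    try tauto
  -- log derivative of the partial products
  have hlogG : ∀ n, logDeriv (myG n) x =
      ∑ k ∈ Finset.range n, -(1 / ((k : ℂ) + 1 / 2 - x) - 1 / ((k : ℂ) + 1 / 2 + x)) := by
    intro n
    have h : logDeriv (myG n) x =
        ∑ k ∈ Finset.range n, logDeriv (fun z : ℂ => 1 - z ^ 2 / ((k : ℂ) + 1 / 2) ^ 2) x :=
      logDeriv_prod (s := Finset.range n) (f := fun k (z : ℂ) => 1 - z ^ 2 / ((k : ℂ) + 1 / 2) ^ 2) (x := x)
        (fun k _ => hfac k)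
        (fun k _ => (differentiableAt_const _).sub ((differentiableAt_pow 2).div_const _))
    rw [h]
    refine Finset.sum_congr rfl fun k _ => ?_
    have hd : HasDerivAt (fun z : ℂ => 1 - z ^ 2 / ((k : ℂ) + 1 / 2) ^ 2)
        (-((2 : ℕ) * x ^ 1 / ((k : ℂ) + 1 / 2) ^ 2)) x :=
      ((hasDerivAt_pow 2 x).div_const (((k : ℂ) + 1 / 2) ^ 2)).const_sub 1
    have hc := half_ne k
    have h1 := hsub k
    have h2 := hadd k
    have hc2 : ((k : ℂ) + 1 / 2) ^ 2 ≠ 0 := pow_ne_zero 2 hc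
    have hcc : ((k : ℂ) + 1 / 2) ^ 2 - x ^ 2 ≠ 0 := by
      have e : ((k : ℂ) + 1 / 2) ^ 2 - x ^ 2 = ((k : ℂ) + 1 / 2 - x) * ((k : ℂ) + 1 / 2 + x) := by
        ring
      rw [e]; exact mul_ne_zero h1 h2
    rw [logDeriv_apply, hd.deriv]
    have eB : (1 - x ^ 2 / ((k : ℂ) + 1 / 2) ^ 2) =
        (((k : ℂ) + 1 / 2) ^ 2 - x ^ 2) / ((k : ℂ) + 1 / 2) ^ 2 := by
      rw [eq_div_iff hc2, sub_mul, one_mul, div_mul_cancel₀ _ hc2]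
    have eA : -(((2 : ℕ) : ℂ) * x ^ 1 / ((k : ℂ) + 1 / 2) ^ 2) =
        -(2 * x) / ((k : ℂ) + 1 / 2) ^ 2 := by
      norm_num [neg_div]
    rw [eA, eB, div_div_div_cancel_right₀ hc2]
    rw [div_sub_div _ _ h1 h2, ← neg_div, div_eq_div_iff hcc (mul_ne_zero h1 h2)]
    ring
  -- summability of the series
  have hsummable : Summable (fun k : ℕ => 1 / ((k : ℂ) + 1 / 2 - x) - 1 / ((k : ℂ) + 1 / 2 + x)) := by
    refine Summable.of_norm_bounded_eventually (g := fun k => 4 * ‖x‖ / ((k : ℝ) + 1 / 2) ^ 2)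
      (summable_b (4 * ‖x‖)) ?_
    rw [Nat.cofinite_eq_atTop]
    have hev : ∀ᶠ k : ℕ in Filter.atTop, 2 * ‖x‖ ^ 2 ≤ ((k : ℝ) + 1 / 2) ^ 2 := by
      filter_upwards [Filter.eventually_ge_atTop ⌈2 * ‖x‖ ^ 2⌉₊] with k hk
      have h1 : (2 * ‖x‖ ^ 2 : ℝ) ≤ k := Nat.ceil_le.mp hk
      nlinarith [Nat.cast_nonneg (α := ℝ) k]
    filter_upwards [hev] with k hk
    have hc := half_ne k
    have heqt : 1 / ((k : ℂ) + 1 / 2 - x) - 1 / ((k : ℂ) + 1 / 2 + x) =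
        2 * x / (((k : ℂ) + 1 / 2) ^ 2 - x ^ 2) := by
      have h1 := hsub k
      have h2 := hadd k
      have hcc : ((k : ℂ) + 1 / 2) ^ 2 - x ^ 2 ≠ 0 := by
        have e : ((k : ℂ) + 1 / 2) ^ 2 - x ^ 2 =
            ((k : ℂ) + 1 / 2 - x) * ((k : ℂ) + 1 / 2 + x) := by ring
        rw [e]; exact mul_ne_zero h1 h2
      rw [div_sub_div _ _ h1 h2, div_eq_div_iff (mul_ne_zero h1 h2) hcc]
      ring
    rw [heqt, norm_div]
    have hckR : ‖(((k : ℂ) + 1 / 2)) ^ 2‖ = ((k : ℝ) + 1 / 2) ^ 2 := by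
      rw [norm_pow, norm_half]
    have hden : ((k : ℝ) + 1 / 2) ^ 2 / 2 ≤ ‖(((k : ℂ) + 1 / 2) ^ 2 - x ^ 2)‖ := by
      have h1 : ‖(((k : ℂ) + 1 / 2) ^ 2)‖ - ‖x ^ 2‖ ≤ ‖(((k : ℂ) + 1 / 2) ^ 2 - x ^ 2)‖ :=
        norm_sub_norm_le _ _
      rw [hckR, norm_pow] at h1
      nlinarith
    have hnum : ‖(2 : ℂ) * x‖ = 2 * ‖x‖ := by rw [norm_mul]; norm_num
    rw [hnum]
    have hpos : (0 : ℝ) < ((k : ℝ) + 1 / 2) ^ 2 := by positivity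
    rw [div_le_div_iff₀ (lt_of_lt_of_le (by positivity) hden) hpos]
    calc 2 * ‖x‖ * ((k : ℝ) + 1 / 2) ^ 2
        = 4 * ‖x‖ * (((k : ℝ) + 1 / 2) ^ 2 / 2) := by ring
      _ ≤ 4 * ‖x‖ * ‖(((k : ℂ) + 1 / 2) ^ 2 - x ^ 2)‖ := by
          have : (0:ℝ) ≤ 4 * ‖x‖ := by positivity
          exact mul_le_mul_of_nonneg_left hden this
  -- assemble
  have hT := hsummable.hasSum.tendsto_sum_nat
  have hld2 : Filter.Tendsto
      (fun n => ∑ k ∈ Finset.range n, (1 / ((k : ℂ) + 1 / 2 - x) - 1 / ((k : ℂ) + 1 / 2 + x)))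
      Filter.atTop (𝓝 (((π : ℝ) : ℂ) * Complex.tan ((π : ℝ) * x))) := by
    have h1 : Filter.Tendsto (fun n => -logDeriv (myG n) x) Filter.atTop
        (𝓝 (-logDeriv (fun z => Complex.cos ((π : ℝ) * z)) x)) := hld.neg
    rw [hldcos, neg_neg] at h1
    refine h1.congr fun n => ?_
    rw [hlogG, Finset.sum_neg_distrib, neg_neg]
  exact (tendsto_nhds_unique hT hld2).symm

end final
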